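/- Let G be a profinite group which is virtually abelian (has an open abelian normal subgroup), and suppose the word w_o takes fewer than 2^{\aleph_0} values in G. Then the center Z(w_o(G)) is open in w_o(G), and consequently, by Schur's theorem, the commutator subgroup w_o(G)' is finite. -/

import Mathlib

open Cardinal
open scoped commutatorElement

/-- The auxiliary word `v(x,y) = [[x^d, y^d]^d, [y^d, x^{-d}]^d]`. -/
def vWord {G : Type*} [Group G] (d : ℕ) (x y : G) : G :=
  ⁅⁅x ^ d, y ^ d⁆ ^ d, ⁅y ^ d, (x⁻¹) ^ d⁆ ^ d⁆

/-- The signs `ε_i` in Olshanskii's word, with `ε_0 = 1`. -/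
def eps (i : ℕ) : ℤ :=
  if i = 0 ∨ i % 10 = 1 ∨ i % 10 = 2 ∨ i % 10 = 3 ∨ i % 10 = 5 ∨ i % 10 = 6 then 1 else -1

/-- Olshanskii's word
`w_o(x,y) = [x,y] v(x,y)^n [x,y]^{ε_1} v(x,y)^{n+1} ⋯ [x,y]^{ε_{h-1}} v(x,y)^{n+h-1}`. -/
def wo {G : Type*} [Group G] (d n h : ℕ) (x y : G) : G :=
  ((List.range h).map fun i => ⁅x, y⁆ ^ eps i * vWord d x y ^ (n + i)).prod

/-- The set of `w_o`-values in `G`. -/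
def woValues (G : Type*) [Group G] (d n h : ℕ) : Set G :=
  {g : G | ∃ x y : G, wo d n h x y = g}

section WordLemmas

variable {G H : Type*} [Group G] [Group H]

lemma wo_map (f : G →* H) (d n h : ℕ) (x y : G) :
    f (wo d n h x y) = wo d n h (f x) (f y) := by
  unfold wo
  rw [map_list_prod, List.map_map]
  congr 1
  have : (⇑f ∘ fun i => ⁅x, y⁆ ^ eps i * vWord d x y ^ (n + i)) =
      fun i => ⁅f x, f y⁆ ^ eps i * vWord d (f x) (f y) ^ (n + i) := by
    funext i
    simp only [Function.comp_apply, map_mul, map_zpow, map_pow, vWord, map_commutatorElement,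
      map_inv]
  rw [this]

lemma conj_mem_woValues {d n h : ℕ} {g c : G} (hg : g ∈ woValues G d n h) :
    c⁻¹ * g * c ∈ woValues G d n h := by
  obtain ⟨x, y, rfl⟩ := hg
  refine ⟨c⁻¹ * x * c, c⁻¹ * y * c, ?_⟩
  have := wo_map (MulAut.conj c⁻¹).toMonoidHom d n h x y
  simp only [MulEquiv.coe_toMonoidHom, MulAut.conj_apply, inv_inv] at this
  exact this.symm

end WordLemmas

section ProfiniteCardinality

variable {K : Type*} [Group K] [TopologicalSpace K] [IsTopologicalGroup K]
  [CompactSpace K] [T2Space K] [TotallyDisconnectedSpace K]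

lemma exists_openSubgroup_not_mem {t : K} (ht : t ≠ 1) :
    ∃ H : OpenSubgroup K, t ∉ H := by
  haveI : TotallySeparatedSpace K := loc_compact_t2_tot_disc_iff_tot_sep.mp ‹_›
  obtain ⟨W, hW, h1W, htW⟩ := exists_isClopen_of_totally_separated (Ne.symm ht)
  obtain ⟨H, hH⟩ := IsTopologicalGroup.exist_openSubgroup_sub_clopen_nhds_of_one hW h1W
  exact ⟨H, fun hmem => htW (hH hmem)⟩

lemma openSubgroup_infinite [Infinite K] (U : OpenSubgroup K) : Infinite U := by
  haveI : Finite (K ⧸ U.toSubgroup) := Subgroup.quotient_finite_of_isOpen _ U.isOpen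
  rw [← not_finite_iff_infinite]
  intro hfin
  haveI : Finite K :=
    Finite.of_equiv _ (Subgroup.groupEquivQuotientProdSubgroup (s := U.toSubgroup)).symm
  exact not_finite K

lemma exists_step [Infinite K] (U : OpenSubgroup K) :
    ∃ p : OpenSubgroup K × K, p.1 ≤ U ∧ p.2 ∈ U ∧ p.2 ∉ p.1 := by
  haveI := openSubgroup_infinite U
  obtain ⟨⟨t, htU⟩, ht1⟩ : ∃ x : U, x ≠ (1 : U) := exists_ne 1
  have ht1' : t ≠ 1 := fun hh => ht1 (Subtype.ext hh)
  obtain ⟨H, hH⟩ := exists_openSubgroup_not_mem ht1'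
  refine ⟨(U ⊓ H, t), inf_le_left, htU, fun hmem => hH ?_⟩
  exact (OpenSubgroup.mem_inf.mp hmem).2

lemma continuum_le_of_infinite [Infinite K] : Cardinal.continuum ≤ #K := by
  classical
  choose g hg1 hg2 hg3 using fun U : OpenSubgroup K => exists_step (K := K) U
  let N : ℕ → OpenSubgroup K := fun k => Nat.recAux ⊤ (fun _ W => (g W).1) k
  let t : ℕ → K := fun k => (g (N k)).2
  have hle : ∀ k, N (k + 1) ≤ N k := fun k => hg1 (N k)
  have htmem : ∀ k, t k ∈ N k := fun k => hg2 (N k)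
  have htnot : ∀ k, t k ∉ N (k + 1) := fun k => hg3 (N k)
  have hmono' : ∀ m k, N (k + m) ≤ N k := by
    intro m
    induction m with
    | zero => exact fun k => le_rfl
    | succ m ih => exact fun k => (hle (k + m)).trans (ih k)
  have hmono : ∀ {j k : ℕ}, k ≤ j → N j ≤ N k := by
    intro j k hkj
    obtain ⟨m, rfl⟩ := Nat.exists_eq_add_of_le hkj
    exact hmono' m k
  set x : (ℕ → Bool) → ℕ → K :=
    fun σ k => ((List.range k).map (fun i => if σ i then t i else 1)).prod with hx
  have hx_succ : ∀ σ k, x σ (k + 1) = x σ k * (if σ k then t k else 1) := by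
    intro σ k
    simp [hx, List.range_succ]
  have htail : ∀ σ k m, k ≤ m → (x σ k)⁻¹ * x σ m ∈ N k := by
    intro σ k m hkm
    induction m, hkm using Nat.le_induction with
    | base => simpa using (N k).toSubgroup.one_mem
    | succ m hkm ih =>
      rw [hx_succ, ← mul_assoc]
      refine (N k).toSubgroup.mul_mem ih ?_
      by_cases hσ : σ m
      · simpa [hσ] using hmono hkm (htmem m)
      · simpa [hσ] using (N k).toSubgroup.one_mem
  have hcl : ∀ σ : ℕ → Bool, ∃ z : K, MapClusterPt z Filter.atTop (x σ) := by
    intro σ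
    obtain ⟨z, _, hz⟩ := IsCompact.exists_mapClusterPt (isCompact_univ (X := K))
      (f := Filter.atTop) (u := x σ) (by simp)
    exact ⟨z, hz⟩
  choose F hF using hcl
  have hcoset : ∀ σ k, (x σ k)⁻¹ * F σ ∈ N k := by
    intro σ k
    set C : Set K := (fun y => (x σ k)⁻¹ * y) ⁻¹' ((N k).toSubgroup : Set K) with hC
    have hCclosed : IsClosed C := (N k).isClosed.preimage (continuous_const.mul continuous_id)
    have htail' : C ∈ Filter.map (x σ) Filter.atTop := by
      rw [Filter.mem_map, Filter.mem_atTop_sets]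
      exact ⟨k, fun m hm => htail σ k m hm⟩
    have h1 : ClusterPt (F σ) (Filter.principal C) :=
      ClusterPt.mono (hF σ) (Filter.le_principal_iff.mpr htail')
    have h2 : F σ ∈ closure C := mem_closure_iff_clusterPt.mpr h1
    rw [hCclosed.closure_eq] at h2
    exact h2
  have hinj : Function.Injective F := by
    intro σ τ hFeq
    by_contra hne
    have hex : ∃ k, σ k ≠ τ k := by
      by_contra hc
      push_neg at hc
      exact hne (funext hc)
    set k := Nat.find hex with hkdef
    have hk : σ k ≠ τ k := Nat.find_spec hex
    have hlt : ∀ i < k, σ i = τ i := fun i hi => not_not.mp (Nat.find_min hex hi)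
    have hxeq : x σ k = x τ k := by
      simp only [hx]
      congr 1
      refine List.map_congr_left ?_
      intro i hi
      rw [hlt i (List.mem_range.mp hi)]
    have h1 := hcoset σ (k + 1)
    have h2 := hcoset τ (k + 1)
    rw [hx_succ, hFeq] at h1
    rw [hx_succ, ← hxeq] at h2
    have h3 := (N (k + 1)).toSubgroup.mul_mem h1 ((N (k + 1)).toSubgroup.inv_mem h2)
    have heq : ((x σ k * (if σ k then t k else 1))⁻¹ * F τ) *
        ((x σ k * (if τ k then t k else 1))⁻¹ * F τ)⁻¹
        = (if σ k then t k else 1)⁻¹ * (if τ k then t k else 1) := by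
      group
    rw [heq] at h3
    cases hσk : σ k <;> cases hτk : τ k <;> rw [hσk, hτk] at h3 hk
    · exact hk rfl
    · simp only [Bool.false_eq_true, if_false, if_true, inv_one, one_mul] at h3
      exact htnot k h3
    · simp only [Bool.false_eq_true, if_false, if_true, mul_one] at h3
      exact htnot k (by simpa using (N (k + 1)).toSubgroup.inv_mem h3)
    · exact hk rfl
  have hinj' : Function.Injective (fun σ : ULift.{_} (ℕ → Bool) => F σ.down) :=
    hinj.comp ULift.down_injective
  have hle' := Cardinal.mk_le_of_injective hinj'
  rw [Cardinal.mk_uLift] at hle'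
  have hmk : #(ℕ → Bool) = Cardinal.continuum := by
    rw [← Cardinal.two_power_aleph0, ← Cardinal.mk_bool, ← Cardinal.mk_nat, Cardinal.power_def]
  rw [hmk, Cardinal.lift_continuum] at hle'
  exact hle'

lemma finite_of_mk_lt_continuum (h : #K < Cardinal.continuum) : Finite K := by
  rw [← not_infinite_iff_finite]
  intro h'
  exact absurd continuum_le_of_infinite (not_le.mpr h)

end ProfiniteCardinality

section Centralizer

variable {G : Type*} [Group G] [TopologicalSpace G] [IsTopologicalGroup G]
  [CompactSpace G] [T2Space G] [TotallyDisconnectedSpace G]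

lemma isClosed_centralizer_singleton (g : G) :
    IsClosed ((Subgroup.centralizer {g} : Subgroup G) : Set G) := by
  have : ((Subgroup.centralizer {g} : Subgroup G) : Set G) = {k | k * g = g * k} := by
    ext k
    exact Subgroup.mem_centralizer_singleton_iff
  rw [this]
  exact isClosed_eq (continuous_id.mul continuous_const) (continuous_const.mul continuous_id)

lemma centralizer_isOpen_of_woValue {d n h : ℕ}
    (A : Subgroup G) (hAnorm : A.Normal) (hAopen : IsOpen (A : Set G))
    (hAab : ∀ a ∈ A, ∀ b ∈ A, a * b = b * a)
    (hcard : #(woValues G d n h) < Cardinal.continuum)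
    {g : G} (hg : g ∈ woValues G d n h) :
    IsOpen ((Subgroup.centralizer {g} : Subgroup G) : Set G) := by
  classical
  set f : ↥A →* G :=
    { toFun := fun a => (a : G)⁻¹ * (g * a * g⁻¹)
      map_one' := by simp
      map_mul' := by
        intro a b
        have hα : g * (a : G) * g⁻¹ ∈ A := hAnorm.conj_mem a a.2 g
        have key : (b : G)⁻¹ * ((a : G)⁻¹ * (g * a * g⁻¹)) =
            ((a : G)⁻¹ * (g * a * g⁻¹)) * (b : G)⁻¹ :=
          hAab _ (A.inv_mem b.2) _ (A.mul_mem (A.inv_mem a.2) hα)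
        have expand : ((a * b : ↥A) : G)⁻¹ * (g * ((a * b : ↥A) : G) * g⁻¹)
            = (b : G)⁻¹ * ((a : G)⁻¹ * (g * a * g⁻¹)) * (g * b * g⁻¹) := by
          push_cast
          group
        show ((a * b : ↥A) : G)⁻¹ * (g * ((a * b : ↥A) : G) * g⁻¹) =
          ((a : G)⁻¹ * (g * (a : G) * g⁻¹)) * ((b : G)⁻¹ * (g * (b : G) * g⁻¹))
        rw [expand, key, mul_assoc] } with hf
  have hfcont : Continuous f := by
    simp only [hf, MonoidHom.coe_mk, OneHom.coe_mk]
    fun_prop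
  haveI hAcompact : CompactSpace ↥A :=
    isCompact_iff_compactSpace.mp (A.isClosed_of_isOpen hAopen).isCompact
  set Kr : Subgroup G := f.range with hKr
  have hKcompact : IsCompact (Kr : Set G) := by
    rw [hKr, MonoidHom.coe_range]
    exact isCompact_range hfcont
  have hKclosed : IsClosed (Kr : Set G) := hKcompact.isClosed
  -- injection from Kr into the set of wo-values
  have hmem : ∀ k : ↥Kr, (k : G) * g ∈ woValues G d n h := by
    rintro ⟨k, hk⟩
    obtain ⟨a, rfl⟩ := hk
    have : f a * g = (a : G)⁻¹ * g * (a : G) := by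
      simp only [hf, MonoidHom.coe_mk, OneHom.coe_mk]
      group
    rw [this]
    exact conj_mem_woValues hg
  have hKcard : #↥Kr < Cardinal.continuum := by
    refine lt_of_le_of_lt (Cardinal.mk_le_of_injective
      (f := fun k : ↥Kr => (⟨(k : G) * g, hmem k⟩ : woValues G d n h)) ?_) hcard
    intro k k' hkk
    have := congrArg Subtype.val hkk
    simp only at this
    exact Subtype.ext (mul_right_cancel this)
  haveI : CompactSpace ↥Kr := isCompact_iff_compactSpace.mp hKcompact
  haveI : Finite ↥Kr := finite_of_mk_lt_continuum hKcard
  -- kernel of f is the centralizer (within A)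
  have hker : f.ker = (Subgroup.centralizer {g}).subgroupOf A := by
    ext a
    simp only [MonoidHom.mem_ker, hf, MonoidHom.coe_mk, OneHom.coe_mk,
      Subgroup.mem_subgroupOf, Subgroup.mem_centralizer_singleton_iff]
    rw [inv_mul_eq_one, eq_comm, mul_inv_eq_iff_eq_mul]
    exact eq_comm
  haveI hq : Finite (↥A ⧸ f.ker) :=
    Finite.of_equiv _ (QuotientGroup.quotientKerEquivRange f).symm.toEquiv
  haveI : f.ker.FiniteIndex := Subgroup.finiteIndex_of_finite_quotient
  haveI : Finite (G ⧸ A) := Subgroup.quotient_finite_of_isOpen A hAopen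
  haveI : A.FiniteIndex := Subgroup.finiteIndex_of_finite_quotient
  set D : Subgroup G := A ⊓ Subgroup.centralizer {g} with hD
  have hrel : D.relIndex A = f.ker.index := by
    rw [hD, Subgroup.relIndex, Subgroup.inf_subgroupOf_left, hker]
  have hDindex : D.index ≠ 0 := by
    rw [← Subgroup.relIndex_mul_index (show D ≤ A from inf_le_left), hrel]
    exact Nat.mul_ne_zero Subgroup.FiniteIndex.index_ne_zero Subgroup.FiniteIndex.index_ne_zero
  haveI : D.FiniteIndex := ⟨hDindex⟩
  have hDclosed : IsClosed (D : Set G) := by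
    rw [hD, Subgroup.coe_inf]
    exact (A.isClosed_of_isOpen hAopen).inter (isClosed_centralizer_singleton g)
  have hDopen := Subgroup.isOpen_of_isClosed_of_finiteIndex D hDclosed
  exact Subgroup.isOpen_mono (show D ≤ Subgroup.centralizer {g} from inf_le_right) hDopen

end Centralizer

section Schur

variable {H : Type*} [Group H]

lemma commutator_mul_central_right {z : H} (hz : z ∈ Subgroup.center H) (g k : H) :
    ⁅g * z, k⁆ = ⁅g, k⁆ := by
  have c1 : z * k = k * z := (Subgroup.mem_center_iff.mp hz k).symm
  rw [commutatorElement_def, commutatorElement_def, mul_inv_rev,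
    mul_assoc g z k, c1, ← mul_assoc g k z, mul_assoc (g * k) z, mul_inv_cancel_left]

lemma commutator_mul_central {z z' : H} (hz : z ∈ Subgroup.center H)
    (hz' : z' ∈ Subgroup.center H) (g k : H) : ⁅g * z, k * z'⁆ = ⁅g, k⁆ := by
  rw [← commutatorElement_inv, commutator_mul_central_right hz', commutatorElement_inv,
    commutator_mul_central_right hz]

lemma finite_commutatorSet_of_finite_quotient_center
    [Finite (H ⧸ Subgroup.center H)] : Finite (commutatorSet H) := by
  classical
  set Z := Subgroup.center H with hZ
  have hout : ∀ a : H, ∃ z ∈ Z, (QuotientGroup.mk a : H ⧸ Z).out = a * z := by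
    intro a
    have h1 : (QuotientGroup.mk ((QuotientGroup.mk a : H ⧸ Z).out) : H ⧸ Z) =
        QuotientGroup.mk a := Quotient.out_eq' _
    refine ⟨a⁻¹ * (QuotientGroup.mk a : H ⧸ Z).out, QuotientGroup.eq.mp h1.symm, ?_⟩
    rw [mul_inv_cancel_left]
  have hsur : Function.Surjective
      (fun p : (H ⧸ Z) × (H ⧸ Z) =>
        (⟨⁅p.1.out, p.2.out⁆, p.1.out, p.2.out, rfl⟩ : commutatorSet H)) := by
    rintro ⟨c, a, b, rfl⟩
    refine ⟨(QuotientGroup.mk a, QuotientGroup.mk b), ?_⟩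
    obtain ⟨z, hzZ, hza⟩ := hout a
    obtain ⟨z', hz'Z, hz'b⟩ := hout b
    exact Subtype.ext (by simp only; rw [hza, hz'b, commutator_mul_central hzZ hz'Z])
  exact Finite.of_surjective _ hsur

end Schur

/-- If `G` is a virtually abelian profinite group with fewer than `2^ℵ₀`
`w_o`-values, then the center of `w_o(G)` (the closed verbal subgroup) is open in
`w_o(G)` and hence, by Schur's theorem, `w_o(G)'` is finite. -/
theorem stmt14 {G : Type*} [Group G] [TopologicalSpace G] [IsTopologicalGroup G]
    [CompactSpace G] [T2Space G] [TotallyDisconnectedSpace G]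
    (d n h : ℕ) (hd : 0 < d) (hn : 0 < n) (hh : h % 10 = 1) (hh' : 50000 < h)
    (hva : ∃ A : Subgroup G, A.Normal ∧ IsOpen (A : Set G) ∧
      ∀ a ∈ A, ∀ b ∈ A, a * b = b * a)
    (hcard : #(woValues G d n h) < Cardinal.continuum) :
    IsOpen ((Subgroup.center ↥((Subgroup.closure (woValues G d n h)).topologicalClosure) :
        Subgroup ↥((Subgroup.closure (woValues G d n h)).topologicalClosure)) :
        Set ↥((Subgroup.closure (woValues G d n h)).topologicalClosure)) ∧
      Finite ↥(⁅(Subgroup.closure (woValues G d n h)).topologicalClosure,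
        (Subgroup.closure (woValues G d n h)).topologicalClosure⁆ : Subgroup G) := by
  classical
  obtain ⟨A, hAnorm, hAopen, hAab⟩ := hva
  haveI := hAnorm
  set V : Set G := woValues G d n h with hV
  set W : Subgroup G := (Subgroup.closure V).topologicalClosure with hW
  haveI : Finite (G ⧸ A) := Subgroup.quotient_finite_of_isOpen A hAopen
  -- choose finitely many wo-values covering all cosets met by V
  have hsec : ∀ q : G ⧸ A, ∃ g₀ : G,
      q ∈ (QuotientGroup.mk '' V : Set (G ⧸ A)) → g₀ ∈ V ∧ (QuotientGroup.mk g₀ : G ⧸ A) = q := by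
    intro q
    by_cases hq : q ∈ (QuotientGroup.mk '' V : Set (G ⧸ A))
    · obtain ⟨g₀, hg₀, rfl⟩ := hq
      exact ⟨g₀, fun _ => ⟨hg₀, rfl⟩⟩
    · exact ⟨1, fun hq' => absurd hq' hq⟩
  choose s hs using hsec
  set S : Set G := s '' (QuotientGroup.mk '' V : Set (G ⧸ A)) with hS
  have hSfin : S.Finite := (Set.toFinite _).image s
  have hSsub : S ⊆ V := by
    rintro _ ⟨q, hq, rfl⟩
    exact (hs q hq).1
  -- the big open subgroup containing W
  set Hbig : Subgroup G := Subgroup.closure (S ∪ (A : Set G)) with hHbig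
  have hAle : A ≤ Hbig := fun a ha => Subgroup.subset_closure (Or.inr ha)
  have hHbigOpen : IsOpen (Hbig : Set G) := Subgroup.isOpen_mono hAle hAopen
  have hVsub : V ⊆ Hbig := by
    intro g hg
    have hq : (QuotientGroup.mk g : G ⧸ A) ∈ (QuotientGroup.mk '' V : Set (G ⧸ A)) :=
      ⟨g, hg, rfl⟩
    obtain ⟨hg₀V, hg₀q⟩ := hs _ hq
    have hmemA : (s (QuotientGroup.mk g))⁻¹ * g ∈ A := QuotientGroup.eq.mp hg₀q
    have hg₀S : s (QuotientGroup.mk g) ∈ S := ⟨_, hq, rfl⟩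
    have : g = s (QuotientGroup.mk g) * ((s (QuotientGroup.mk g))⁻¹ * g) := by group
    rw [this]
    exact Hbig.mul_mem (Subgroup.subset_closure (Or.inl hg₀S)) (hAle hmemA)
  have hWle : W ≤ Hbig := by
    rw [hW]
    exact Subgroup.topologicalClosure_minimal _ (Subgroup.closure_le Hbig |>.mpr hVsub)
      (Hbig.isClosed_of_isOpen hHbigOpen)
  -- the open subgroup B centralizing W
  set B : Subgroup G := A ⊓ Subgroup.centralizer S with hB
  have hBopen : IsOpen (B : Set G) := by
    have hcs : ((Subgroup.centralizer S : Subgroup G) : Set G) =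
        ⋂ x ∈ S, ((Subgroup.centralizer {x} : Subgroup G) : Set G) := by
      ext k
      simp only [SetLike.mem_coe, Subgroup.mem_centralizer_iff, Set.mem_iInter]
      constructor
      · intro hk x hx
        intro m hm
        rw [Set.mem_singleton_iff.mp hm]
        exact hk x hx
      · intro hk x hx
        exact hk x hx x rfl
    rw [hB, Subgroup.coe_inf, hcs]
    exact hAopen.inter (hSfin.isOpen_biInter (fun x hx =>
      centralizer_isOpen_of_woValue A hAnorm hAopen hAab hcard (hSsub hx)))
  have hBcent : ∀ b ∈ B, ∀ w ∈ W, b * w = w * b := by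
    intro b hb w hw
    have hble : Hbig ≤ Subgroup.centralizer {b} := by
      rw [hHbig]
      refine Subgroup.closure_le _ |>.mpr ?_
      rintro x (hxS | hxA)
      · exact Subgroup.mem_centralizer_singleton_iff.mpr (hb.2 x hxS)
      · exact Subgroup.mem_centralizer_singleton_iff.mpr (hAab x hxA b hb.1)
    have := hble (hWle hw)
    exact (Subgroup.mem_centralizer_singleton_iff.mp this).symm
  -- part 1 : the center is open
  have hcenter : IsOpen ((Subgroup.center ↥W : Subgroup ↥W) : Set ↥W) := by
    have hKle : Subgroup.comap W.subtype B ≤ Subgroup.center ↥W := by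
      intro k hk
      rw [Subgroup.mem_center_iff]
      intro w
      have := hBcent (k : G) hk (w : G) w.2
      exact Subtype.ext (this.symm)
    have hKopen : IsOpen ((Subgroup.comap W.subtype B : Subgroup ↥W) : Set ↥W) := by
      rw [Subgroup.coe_comap]
      exact hBopen.preimage continuous_subtype_val
    exact Subgroup.isOpen_mono hKle hKopen
  refine ⟨hcenter, ?_⟩
  -- part 2 : Schur
  haveI : CompactSpace ↥W :=
    isCompact_iff_compactSpace.mp (Subgroup.isClosed_topologicalClosure _).isCompact
  haveI : Finite (↥W ⧸ Subgroup.center ↥W) :=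
    Subgroup.quotient_finite_of_isOpen _ hcenter
  haveI : Finite (commutatorSet ↥W) := finite_commutatorSet_of_finite_quotient_center
  haveI : Finite (_root_.commutator ↥W) := inferInstance
  have hmap : (⁅W, W⁆ : Subgroup G) = Subgroup.map W.subtype (_root_.commutator ↥W) := by
    rw [commutator_def, Subgroup.map_commutator, ← MonoidHom.range_eq_map,
      Subgroup.range_subtype]
  rw [hmap]
  exact Finite.of_equiv _
    (Subgroup.equivMapOfInjective (_root_.commutator ↥W) W.subtype
      W.subtype_injective).toEquiv
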